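/- Let a, b ∈ ℤ with a ≠ 0 and let G(x) = x⁸ + a·x⁶ + b·x⁴ + a·x² + 1. Suppose that b+2−2a and b+2+2a are squarefree integers, that a²−4b+8 is not divisible by the square of any odd prime, and that (a mod 4, b mod 4) ∈ {(0,1), (2,3)}. Then G(x) is not monogenic. -/

import Mathlib

open Polynomial

/-- A monic polynomial `f ∈ ℤ[x]` is *monogenic* if it is irreducible over `ℚ` and,
for any number field `K` generated over `ℚ` by a root `θ` of `f`, the ring `ℤ[θ]`
is the full ring of integers (the integral closure of `ℤ`) of `K`. -/
def IsMonogenic (f : Polynomial ℤ) : Prop :=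
  f.Monic ∧ Irreducible (f.map (Int.castRingHom ℚ)) ∧
    ∀ (K : Type) [Field K] [NumberField K] (θ : K),
      Polynomial.aeval θ f = 0 →
      Algebra.adjoin ℚ {θ} = (⊤ : Subalgebra ℚ K) →
      Algebra.adjoin ℤ {θ} = integralClosure ℤ K

lemma id1 (s t : ℤ) :
    (1 + X ^ 2 + X ^ 3 + X ^ 4 + X ^ 5 + X ^ 7 : Polynomial ℤ) ^ 2 =
      (X ^ 8 + C (4 * s) * X ^ 6 + C (4 * t + 1) * X ^ 4 + C (4 * s) * X ^ 2 + 1) *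
        (C (1 - 8*t - 8*s + 32*s*t + 32*s*s - 64*s*s*s) + C (4 - 8*s) * X ^ 1 + C (2 - 4*t - 8*s + 16*s*s) * X ^ 2 + C (2) * X ^ 3 + C (2 - 4*s) * X ^ 4 + C (1) * X ^ 6)
      + 4 * (C (2*t + 2*s - 8*s*t - 8*s*s + 16*s*s*s) + C (-1 + 2*s) * X ^ 1 + C (t + s + 8*s*t + 4*s*s - 32*s*s*t - 32*s*s*s + 64*s*s*s*s) * X ^ 2 + C (-4*s + 8*s*s) * X ^ 3 + C (t + 8*t*t + s + 4*s*t - 32*s*t*t - 32*s*s*t + 64*s*s*s*t) * X ^ 4 + C (-4*t + 8*s*t) * X ^ 5 + C (-t + 4*t*t - s + 16*s*t + 8*s*s - 48*s*s*t - 32*s*s*s + 64*s*s*s*s) * X ^ 6 + C (1 - 2*t - 4*s + 8*s*s) * X ^ 7) := by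
  simp only [map_add, map_sub, map_mul, map_pow, map_one, map_neg, map_ofNat, Polynomial.C_0, Polynomial.C_1]
  ring

lemma id2 (s t : ℤ) :
    (1 + X ^ 2 + X ^ 3 + X ^ 4 + X ^ 5 + X ^ 7 : Polynomial ℤ) ^ 2 =
      (X ^ 8 + C (4 * s + 2) * X ^ 6 + C (4 * t + 3) * X ^ 4 + C (4 * s + 2) * X ^ 2 + 1) *
        (C (1 + 8*t - 8*s + 32*s*t - 64*s*s - 64*s*s*s) + C (-8*s) * X ^ 1 + C (-4*t + 8*s + 16*s*s) * X ^ 2 + C (2) * X ^ 3 + C (-4*s) * X ^ 4 + C (1) * X ^ 6)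
      + 4 * (C (-2*t + 2*s - 8*s*t + 16*s*s + 16*s*s*s) + C (2*s) * X ^ 1 + C (-3*t + s - 24*s*t + 36*s*s - 32*s*s*t + 96*s*s*s + 64*s*s*s*s) * X ^ 2 + C (4*s + 8*s*s) * X ^ 3 + C (-5*t - 8*t*t + 3*s - 12*s*t - 32*s*t*t + 32*s*s + 64*s*s*t + 32*s*s*s + 64*s*s*s*t) * X ^ 4 + C (4*s + 8*s*t) * X ^ 5 + C (-t + 4*t*t - s - 32*s*t + 32*s*s - 48*s*s*t + 96*s*s*s + 64*s*s*s*s) * X ^ 6 + C (-2*t + 4*s + 8*s*s) * X ^ 7) := by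
  simp only [map_add, map_sub, map_mul, map_pow, map_one, map_neg, map_ofNat, Polynomial.C_0, Polynomial.C_1]
  ring

lemma aux_not_monogenic (a b : ℤ) (w r : Polynomial ℤ)
    (hid : (1 + X ^ 2 + X ^ 3 + X ^ 4 + X ^ 5 + X ^ 7 : Polynomial ℤ) ^ 2 =
      (X ^ 8 + C a * X ^ 6 + C b * X ^ 4 + C a * X ^ 2 + 1) * w + 4 * r) :
    ¬ IsMonogenic (X ^ 8 + C a * X ^ 6 + C b * X ^ 4 + C a * X ^ 2 + 1) := by
  set G : Polynomial ℤ := X ^ 8 + C a * X ^ 6 + C b * X ^ 4 + C a * X ^ 2 + 1 with hG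
  set v : Polynomial ℤ := 1 + X ^ 2 + X ^ 3 + X ^ 4 + X ^ 5 + X ^ 7 with hv
  rintro ⟨hm, hirr, hmax⟩
  have hGdeg : G.natDegree = 8 := by rw [hG]; compute_degree!
  set P : Polynomial ℚ := G.map (Int.castRingHom ℚ) with hP
  haveI hFact : Fact (Irreducible P) := ⟨hirr⟩
  have hPm : P.Monic := hm.map _
  have hP0 : P ≠ 0 := hPm.ne_zero
  haveI : CharZero (AdjoinRoot P) :=
    charZero_of_injective_algebraMap (algebraMap ℚ (AdjoinRoot P)).injective
  haveI : FiniteDimensional ℚ (AdjoinRoot P) := (AdjoinRoot.powerBasis hP0).finite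
  haveI : NumberField (AdjoinRoot P) := ⟨⟩
  set θ : AdjoinRoot P := AdjoinRoot.root P with hθ
  have hroot : aeval θ G = 0 := by
    rw [← Polynomial.aeval_map_algebraMap ℚ, algebraMap_int_eq, ← hP, hθ]
    exact AdjoinRoot.aeval_eq P ▸ AdjoinRoot.mk_self
  have hgen : Algebra.adjoin ℚ {θ} = ⊤ := AdjoinRoot.adjoinRoot_eq_top
  have heq : Algebra.adjoin ℤ {θ} = integralClosure ℤ (AdjoinRoot P) := by
    convert hmax (AdjoinRoot P) θ hroot hgen
    case e'_3.e'_4 => rfl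
    all_goals exact Subsingleton.elim _ _
  have hx2 : (aeval θ v) ^ 2 = 4 * aeval θ r := by
    have h := congrArg (aeval θ) hid
    simpa [map_add, map_mul, map_pow, map_ofNat, hroot] using h
  have hy : IsIntegral ℤ (aeval θ r) := by
    have : aeval θ r ∈ Algebra.adjoin ℤ {θ} := by
      rw [Algebra.adjoin_singleton_eq_range_aeval]
      exact ⟨r, rfl⟩
    rw [heq] at this
    exact this
  have hη : IsIntegral ℤ ((aeval θ v) / 2) := by
    apply IsIntegral.of_pow (n := 2) two_pos
    have h42 : ((aeval θ v) / 2) ^ 2 = aeval θ r := by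
      rw [div_pow, hx2]
      have h4 : ((2 : AdjoinRoot P)) ^ 2 = 4 := by norm_num
      rw [h4, mul_div_cancel_left₀ _ (by norm_num : (4 : AdjoinRoot P) ≠ 0)]
    rw [h42]
    exact hy
  have hmem : (aeval θ v) / 2 ∈ Algebra.adjoin ℤ {θ} := by
    rw [heq]
    exact hη
  rw [Algebra.adjoin_singleton_eq_range_aeval] at hmem
  obtain ⟨p, hp⟩ := hmem
  have hp' : aeval θ p = (aeval θ v) / 2 := hp
  have h2 : aeval θ (C 2 * p - v) = 0 := by
    rw [map_sub, map_mul, aeval_C, hp']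
    simp only [map_ofNat]
    field_simp
    ring
  have hdvdQ : P ∣ (C 2 * p - v).map (Int.castRingHom ℚ) := by
    rw [← AdjoinRoot.mk_eq_zero, ← AdjoinRoot.aeval_eq, ← algebraMap_int_eq,
      Polynomial.aeval_map_algebraMap]
    exact h2
  have hdvd : G ∣ (C 2 * p - v) := by
    rwa [hP, Polynomial.map_dvd_map (Int.castRingHom ℚ) Int.cast_injective hm] at hdvdQ
  have hdvd2 : (G.map (Int.castRingHom (ZMod 2))) ∣ (v.map (Int.castRingHom (ZMod 2))) := by
    have h := Polynomial.map_dvd (Int.castRingHom (ZMod 2)) hdvd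
    rw [Polynomial.map_sub, Polynomial.map_mul, Polynomial.map_C] at h
    have h20 : (Int.castRingHom (ZMod 2)) (2 : ℤ) = 0 := by decide
    rw [h20, Polynomial.C_0, zero_mul, zero_sub, dvd_neg] at h
    exact h
  have hGbar : (G.map (Int.castRingHom (ZMod 2))).natDegree = 8 := by
    rw [hm.natDegree_map]; exact hGdeg
  have hvne : v.map (Int.castRingHom (ZMod 2)) ≠ 0 := by
    intro h
    have hc : (v.map (Int.castRingHom (ZMod 2))).coeff 0 = 1 := by
      rw [Polynomial.coeff_map, hv]
      simp
    rw [h] at hc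
    simp at hc
  have hle := Polynomial.natDegree_le_of_dvd hdvd2 hvne
  have hv7 : (v.map (Int.castRingHom (ZMod 2))).natDegree ≤ 7 := by
    refine le_trans Polynomial.natDegree_map_le ?_
    rw [hv]; compute_degree
  omega

theorem stmt_3 (a b : ℤ) (ha : a ≠ 0)
    (h1 : Squarefree (b + 2 - 2 * a)) (h2 : Squarefree (b + 2 + 2 * a))
    (h3 : ∀ q : ℕ, q.Prime → q ≠ 2 → ¬ ((q : ℤ) ^ 2 ∣ (a ^ 2 - 4 * b + 8)))
    (hmod : (a % 4 = 0 ∧ b % 4 = 1) ∨ (a % 4 = 2 ∧ b % 4 = 3)) :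
    ¬ IsMonogenic (X ^ 8 + C a * X ^ 6 + C b * X ^ 4 + C a * X ^ 2 + 1) := by
  rcases hmod with ⟨ha4, hb4⟩ | ⟨ha4, hb4⟩
  · obtain ⟨s, rfl⟩ : ∃ s, a = 4 * s := ⟨a / 4, by omega⟩
    obtain ⟨t, rfl⟩ : ∃ t, b = 4 * t + 1 := ⟨b / 4, by omega⟩
    exact aux_not_monogenic _ _ _ _ (id1 s t)
  · obtain ⟨s, rfl⟩ : ∃ s, a = 4 * s + 2 := ⟨a / 4, by omega⟩
    obtain ⟨t, rfl⟩ : ∃ t, b = 4 * t + 3 := ⟨b / 4, by omega⟩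
    exact aux_not_monogenic _ _ _ _ (id2 s t)
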